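/- Let K be a field of characteristic zero, n ≥ 1, k ≥ 0, a ∈ K[x][t]^n, B_0, …, B_k ∈ K[x][t]^{n×n}, and let f ∈ K[x][[t]]^n be the unique solution of f = a + t·Σ_{i=0}^{k} B_i·Δ^i f. Let ε be a new variable, let λ_1, …, λ_n ∈ K \ {0} be pairwise distinct, and set E = ε·diag(λ_1, …, λ_n). Define ã(x,t) = a(x, t²), B̃_i(x,t) = t·B_i(x, t²) for i = 0, …, k−1, and B̃_k(x,t) = E + t·B_k(x, t²). Then the perturbed system f̃ = ã + t·Σ_{i=0}^{k} B̃_i·Δ^i f̃ has a unique solution f̃ ∈ K[x,ε][[t]]^n, and it satisfies [ε^0]f̃(x,t) = f(x, t²), i.e., extracting the ε-constant term of f̃ coefficientwise recovers the solution of the original system with t replaced by t². -/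

import Mathlib

/-- The operator `Δ` on `L[x][[t]]` defined by `Δf = (f − f(0,t))/x`,
acting on each `t`-coefficient (a polynomial in `x`) as `divX`. -/
noncomputable def seriesDelta {L : Type*} [CommRing L] (f : PowerSeries (Polynomial L)) :
    PowerSeries (Polynomial L) :=
  PowerSeries.mk fun N => (PowerSeries.coeff N f).divX

/-- Substitution `t ↦ t²` applied to a polynomial `q ∈ K[x][t]`, landing in
`K[x,ε][[t]]`, where `K[x,ε]` is represented as `(K[ε])[x]`, i.e. as
`Polynomial (Polynomial K)` with inner variable `ε` and outer variable `x`. -/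
noncomputable def substTsq {K : Type*} [CommRing K] (q : Polynomial (Polynomial K)) :
    PowerSeries (Polynomial (Polynomial K)) :=
  PowerSeries.mk fun N =>
    if 2 ∣ N then Polynomial.map (Polynomial.C : K →+* Polynomial K) (q.coeff (N / 2)) else 0

section Aux

open PowerSeries

variable {L : Type*} [CommRing L]

lemma coeff_seriesDelta (N : ℕ) (g : PowerSeries (Polynomial L)) :
    coeff N (seriesDelta g) = (coeff N g).divX := coeff_mk _ _

lemma coeff_seriesDelta_iterate (i N : ℕ) (g : PowerSeries (Polynomial L)) :
    coeff N (seriesDelta^[i] g) = Polynomial.divX^[i] (coeff N g) := by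
  induction i generalizing g with
  | zero => rfl
  | succ i ih =>
    rw [Function.iterate_succ_apply, ih, coeff_seriesDelta, ← Function.iterate_succ_apply]

variable {n : ℕ}

noncomputable def sysRhs (k : ℕ) (A : Fin n → PowerSeries (Polynomial L))
    (Cm : ℕ → Fin n → Fin n → PowerSeries (Polynomial L))
    (g : Fin n → PowerSeries (Polynomial L)) : Fin n → PowerSeries (Polynomial L) :=
  fun p => A p + PowerSeries.X * ∑ i ∈ Finset.range (k + 1), ∑ l,
    Cm i p l * seriesDelta^[i] (g l)

lemma coeff_sysRhs_congr {k : ℕ} {A : Fin n → PowerSeries (Polynomial L)}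
    {Cm : ℕ → Fin n → Fin n → PowerSeries (Polynomial L)}
    {g h : Fin n → PowerSeries (Polynomial L)} {N : ℕ}
    (hgh : ∀ m < N, ∀ l, coeff m (g l) = coeff m (h l)) (p : Fin n) :
    coeff N (sysRhs k A Cm g p) = coeff N (sysRhs k A Cm h p) := by
  unfold sysRhs
  cases N with
  | zero => simp [coeff_zero_X_mul]
  | succ N =>
    simp only [map_add, coeff_succ_X_mul, map_sum]
    congr 1
    refine Finset.sum_congr rfl fun i _ => Finset.sum_congr rfl fun l _ => ?_
    rw [coeff_mul, coeff_mul]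
    refine Finset.sum_congr rfl fun x hx => ?_
    rw [Finset.HasAntidiagonal.mem_antidiagonal] at hx
    rw [coeff_seriesDelta_iterate, coeff_seriesDelta_iterate, hgh x.2 (by omega) l]

set_option maxHeartbeats 1000000 in
lemma coeff_sysRhs_iterate_stable {k : ℕ} {A : Fin n → PowerSeries (Polynomial L)}
    {Cm : ℕ → Fin n → Fin n → PowerSeries (Polynomial L)} :
    ∀ (N : ℕ) (g h : Fin n → PowerSeries (Polynomial L)), ∀ m ≤ N, ∀ p,
      coeff m ((sysRhs k A Cm)^[N + 1] g p) = coeff m ((sysRhs k A Cm)^[N + 1] h p) := by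
  intro N
  induction N with
  | zero =>
    intro g h m hm p
    obtain rfl : m = 0 := Nat.le_zero.mp hm
    simp only [zero_add, Function.iterate_one]
    exact coeff_sysRhs_congr (fun m hm => absurd hm (Nat.not_lt_zero m)) p
  | succ N ih =>
    intro g h m hm p
    have e1 : (sysRhs k A Cm)^[N + 1 + 1] g = sysRhs k A Cm ((sysRhs k A Cm)^[N + 1] g) :=
      Function.iterate_succ_apply' _ _ _
    have e2 : (sysRhs k A Cm)^[N + 1 + 1] h = sysRhs k A Cm ((sysRhs k A Cm)^[N + 1] h) :=
      Function.iterate_succ_apply' _ _ _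
    rw [e1, e2]
    exact coeff_sysRhs_congr (fun m' hm' l => ih g h m' (by omega) l) p

noncomputable def sysSol (k : ℕ) (A : Fin n → PowerSeries (Polynomial L))
    (Cm : ℕ → Fin n → Fin n → PowerSeries (Polynomial L)) : Fin n → PowerSeries (Polynomial L) :=
  fun p => PowerSeries.mk fun N => coeff N ((sysRhs k A Cm)^[N + 1] (fun _ => 0) p)

lemma coeff_sysSol (k : ℕ) (A : Fin n → PowerSeries (Polynomial L))
    (Cm : ℕ → Fin n → Fin n → PowerSeries (Polynomial L)) (N : ℕ) (p : Fin n) :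
    coeff N (sysSol k A Cm p) = coeff N ((sysRhs k A Cm)^[N + 1] (fun _ => 0) p) := by
  simp only [sysSol, coeff_mk]

lemma sysSol_fixed (k : ℕ) (A : Fin n → PowerSeries (Polynomial L))
    (Cm : ℕ → Fin n → Fin n → PowerSeries (Polynomial L)) (p : Fin n) :
    sysSol k A Cm p = sysRhs k A Cm (sysSol k A Cm) p := by
  refine PowerSeries.ext fun N => ?_
  rw [coeff_sysSol, Function.iterate_succ_apply']
  refine coeff_sysRhs_congr (fun m hm l => ?_) p
  rw [coeff_sysSol]
  have hN : N = (m + 1) + (N - m - 1) := by omega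
  rw [hN, Function.iterate_add_apply]
  exact coeff_sysRhs_iterate_stable m _ (fun _ => 0) m le_rfl l

lemma sysSol_unique {k : ℕ} {A : Fin n → PowerSeries (Polynomial L)}
    {Cm : ℕ → Fin n → Fin n → PowerSeries (Polynomial L)}
    {g : Fin n → PowerSeries (Polynomial L)}
    (hg : ∀ p, g p = sysRhs k A Cm g p) : g = sysSol k A Cm := by
  have key : ∀ N p, coeff N (g p) = coeff N (sysSol k A Cm p) := by
    intro N
    induction N using Nat.strong_induction_on with
    | _ N ih =>
      intro p
      rw [hg p, sysSol_fixed k A Cm p]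
      exact coeff_sysRhs_congr (fun m hm l => ih m hm l) p
  funext p
  exact PowerSeries.ext fun N => key N p

end Aux
section Strh
open PowerSeries

noncomputable def strh {R : Type*} [CommRing R] : PowerSeries R →+* PowerSeries R where
  toFun s := PowerSeries.mk fun N => if 2 ∣ N then coeff (N / 2) s else 0
  map_zero' := by ext N; simp
  map_one' := by
    ext N
    simp only [coeff_mk, coeff_one]
    split_ifs with h1 h2 h3 h4 <;> first | rfl | omega
  map_add' u v := by
    ext N
    simp only [coeff_mk, map_add]
    split_ifs <;> simp
  map_mul' u v := by
    ext N
    simp only [coeff_mk, coeff_mul]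
    by_cases hN : 2 ∣ N
    · obtain ⟨M, rfl⟩ := hN
      rw [if_pos ⟨M, rfl⟩]
      have hM : 2 * M / 2 = M := by omega
      rw [hM]
      have step1 : ∀ x ∈ Finset.HasAntidiagonal.antidiagonal (2 * M),
          (if 2 ∣ x.1 then coeff (x.1 / 2) u else 0) *
            (if 2 ∣ x.2 then coeff (x.2 / 2) v else 0)
          = if 2 ∣ x.1 then coeff (x.1 / 2) u * coeff (x.2 / 2) v else 0 := by
        intro x hx
        rw [Finset.HasAntidiagonal.mem_antidiagonal] at hx
        by_cases h1 : 2 ∣ x.1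
        · rw [if_pos h1, if_pos h1, if_pos (show 2 ∣ x.2 by omega)]
        · rw [if_neg h1, if_neg h1, zero_mul]
      rw [Finset.sum_congr rfl step1, ← Finset.sum_filter]
      refine (Finset.sum_nbij' (i := fun x => (x.1 / 2, x.2 / 2))
        (j := fun y => (2 * y.1, 2 * y.2)) ?_ ?_ ?_ ?_ ?_).symm
      · intro x hx
        simp only [Finset.mem_filter, Finset.HasAntidiagonal.mem_antidiagonal] at *
        omega
      · intro y hy
        simp only [Finset.mem_filter, Finset.HasAntidiagonal.mem_antidiagonal] at *
        omega
      · intro x hx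
        simp only [Finset.mem_filter, Finset.HasAntidiagonal.mem_antidiagonal] at hx
        obtain ⟨x1, x2⟩ := x
        simp only [Prod.mk.injEq]
        simp only [Prod.fst, Prod.snd] at hx
        omega
      · intro y hy
        simp only [Finset.HasAntidiagonal.mem_antidiagonal] at hy
        obtain ⟨y1, y2⟩ := y
        simp only [Prod.mk.injEq]
        omega
      · intro x hx
        simp only [Finset.mem_filter, Finset.HasAntidiagonal.mem_antidiagonal] at hx
        rfl
    · rw [if_neg hN]
      refine (Finset.sum_eq_zero fun x hx => ?_).symm
      rw [Finset.HasAntidiagonal.mem_antidiagonal] at hx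
      by_cases h1 : 2 ∣ x.1
      · rw [if_neg (show ¬ 2 ∣ x.2 by omega), mul_zero]
      · rw [if_neg h1, zero_mul]

lemma coeff_strh {R : Type*} [CommRing R] (N : ℕ) (s : PowerSeries R) :
    coeff N (strh s) = if 2 ∣ N then coeff (N / 2) s else 0 := by
  simp only [strh, RingHom.coe_mk, MonoidHom.coe_mk, OneHom.coe_mk, coeff_mk]

lemma strh_X {R : Type*} [CommRing R] : strh (X : PowerSeries R) = X ^ 2 := by
  refine PowerSeries.ext fun N => ?_
  rw [coeff_strh, coeff_X_pow]
  by_cases h : N = 2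
  · subst h; norm_num
  · rw [if_neg h]
    split_ifs with h2
    · rw [coeff_X, if_neg (by omega)]
    · rfl
section Commute

open PowerSeries

lemma strh_seriesDelta {L : Type*} [CommRing L] (s : PowerSeries (Polynomial L)) :
    strh (seriesDelta s) = seriesDelta (strh s) := by
  refine PowerSeries.ext fun N => ?_
  rw [coeff_strh, coeff_seriesDelta, coeff_seriesDelta, coeff_strh]
  split_ifs
  · rfl
  · exact Polynomial.divX_zero.symm

lemma strh_seriesDelta_iterate {L : Type*} [CommRing L] (i : ℕ)
    (s : PowerSeries (Polynomial L)) :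
    strh (seriesDelta^[i] s) = seriesDelta^[i] (strh s) := by
  induction i generalizing s with
  | zero => rfl
  | succ i ih =>
    rw [Function.iterate_succ_apply, ih, strh_seriesDelta, ← Function.iterate_succ_apply]

lemma divX_map {L L' : Type*} [CommRing L] [CommRing L'] (φ : L →+* L') (p : Polynomial L) :
    (p.map φ).divX = p.divX.map φ := by
  apply Polynomial.ext
  intro m
  simp [Polynomial.coeff_divX, Polynomial.coeff_map]

lemma mapRingHom_seriesDelta {L L' : Type*} [CommRing L] [CommRing L'] (φ : L →+* L')
    (s : PowerSeries (Polynomial L)) :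
    PowerSeries.map (Polynomial.mapRingHom φ) (seriesDelta s)
      = seriesDelta (PowerSeries.map (Polynomial.mapRingHom φ) s) := by
  refine PowerSeries.ext fun N => ?_
  rw [PowerSeries.coeff_map, coeff_seriesDelta, coeff_seriesDelta, PowerSeries.coeff_map]
  simp only [Polynomial.coe_mapRingHom]
  exact (divX_map φ _).symm

lemma mapRingHom_seriesDelta_iterate {L L' : Type*} [CommRing L] [CommRing L'] (φ : L →+* L')
    (i : ℕ) (s : PowerSeries (Polynomial L)) :
    PowerSeries.map (Polynomial.mapRingHom φ) (seriesDelta^[i] s)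
      = seriesDelta^[i] (PowerSeries.map (Polynomial.mapRingHom φ) s) := by
  induction i generalizing s with
  | zero => rfl
  | succ i ih =>
    rw [Function.iterate_succ_apply, ih, mapRingHom_seriesDelta, ← Function.iterate_succ_apply]

lemma map_substTsq {K : Type*} [CommRing K] (q : Polynomial (Polynomial K)) :
    PowerSeries.map (Polynomial.mapRingHom (Polynomial.evalRingHom (0 : K))) (substTsq q)
      = strh (q : PowerSeries (Polynomial K)) := by
  refine PowerSeries.ext fun N => ?_
  rw [PowerSeries.coeff_map, coeff_strh]
  simp only [substTsq, coeff_mk]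
  split_ifs with h
  · simp only [Polynomial.coe_mapRingHom, Polynomial.map_map]
    have hcomp : (Polynomial.evalRingHom (0 : K)).comp Polynomial.C = RingHom.id K := by
      ext r
      simp
    rw [hcomp, Polynomial.map_id, Polynomial.coeff_coe]
  · simp

end Commute

theorem perturbed_system_recovers_original
    (K : Type*) [Field K] [CharZero K] (n k : ℕ) (hn : 1 ≤ n)
    (a : Fin n → Polynomial (Polynomial K))
    (B : ℕ → Matrix (Fin n) (Fin n) (Polynomial (Polynomial K)))
    -- f is the (unique) solution of the original system f = a + t·Σᵢ Bᵢ·Δⁱf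
    (f : Fin n → PowerSeries (Polynomial K))
    (hf : ∀ p, f p = (a p : PowerSeries (Polynomial K)) +
        PowerSeries.X * ∑ i ∈ Finset.range (k + 1), ∑ l,
          (B i p l : PowerSeries (Polynomial K)) * seriesDelta^[i] (f l))
    -- pairwise distinct nonzero λ₁,…,λₙ, defining E = ε·diag(λ₁,…,λₙ)
    (lam : Fin n → K) (hlam0 : ∀ p, lam p ≠ 0) (hlam : Function.Injective lam) :
    -- the perturbed system f̃ = ã + t·Σᵢ B̃ᵢ·Δⁱf̃ has a unique solution f̃ in
    -- K[x,ε][[t]]ⁿ, and [ε⁰]f̃(x,t) = f(x,t²)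
    ∃ ft : Fin n → PowerSeries (Polynomial (Polynomial K)),
      (∀ p, ft p = substTsq (a p) +
        PowerSeries.X * ∑ i ∈ Finset.range (k + 1), ∑ l,
          ((if i = k ∧ p = l
              then PowerSeries.C (Polynomial.C (Polynomial.X * Polynomial.C (lam p)))
              else 0)
            + PowerSeries.X * substTsq (B i p l)) * seriesDelta^[i] (ft l)) ∧
      (∀ ft' : Fin n → PowerSeries (Polynomial (Polynomial K)),
        (∀ p, ft' p = substTsq (a p) +
          PowerSeries.X * ∑ i ∈ Finset.range (k + 1), ∑ l,
            ((if i = k ∧ p = l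
                then PowerSeries.C (Polynomial.C (Polynomial.X * Polynomial.C (lam p)))
                else 0)
              + PowerSeries.X * substTsq (B i p l)) * seriesDelta^[i] (ft' l)) →
        ft' = ft) ∧
      (∀ p, PowerSeries.map (Polynomial.mapRingHom (Polynomial.evalRingHom (0 : K))) (ft p)
        = PowerSeries.mk fun N =>
            if 2 ∣ N then PowerSeries.coeff (N / 2) (f p) else 0) := by
  classical
  open PowerSeries in
  -- data for the perturbed system
  refine ⟨sysSol k (fun p => substTsq (a p))
      (fun i p l => (if i = k ∧ p = l
          then PowerSeries.C (Polynomial.C (Polynomial.X * Polynomial.C (lam p)))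
          else 0) + PowerSeries.X * substTsq (B i p l)), ?_, ?_, ?_⟩
  · exact fun p => sysSol_fixed k _ _ p
  · exact fun ft' hft' => sysSol_unique fun p => hft' p
  · -- projection to ε = 0
    intro p
    have hα : ∀ p, strh (f p) = sysRhs k (fun p => strh ((a p : PowerSeries (Polynomial K))))
        (fun i p l => PowerSeries.X * strh ((B i p l : PowerSeries (Polynomial K))))
        (fun l => strh (f l)) p := by
      intro p
      show strh (f p) = strh ((a p : PowerSeries (Polynomial K))) +
        PowerSeries.X * ∑ i ∈ Finset.range (k + 1), ∑ l,
          (PowerSeries.X * strh ((B i p l : PowerSeries (Polynomial K)))) *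
            seriesDelta^[i] (strh (f l))
      rw [hf p]
      simp only [map_add, map_mul, map_sum, strh_X, strh_seriesDelta_iterate]
      rw [add_right_inj]
      simp only [mul_assoc, ← Finset.mul_sum, pow_two]
    have hE : ∀ (i : ℕ) (p l : Fin n),
        PowerSeries.map (Polynomial.mapRingHom (Polynomial.evalRingHom (0 : K)))
          ((if i = k ∧ p = l
              then PowerSeries.C (Polynomial.C (Polynomial.X * Polynomial.C (lam p)))
              else 0) : PowerSeries (Polynomial (Polynomial K))) = 0 := by
      intro i p l
      split_ifs
      · rw [PowerSeries.map_C]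
        simp [Polynomial.coe_mapRingHom, Polynomial.map_C]
      · exact map_zero _
    have hβ : ∀ p, PowerSeries.map (Polynomial.mapRingHom (Polynomial.evalRingHom (0 : K)))
        (sysSol k (fun p => substTsq (a p))
          (fun i p l => (if i = k ∧ p = l
              then PowerSeries.C (Polynomial.C (Polynomial.X * Polynomial.C (lam p)))
              else 0) + PowerSeries.X * substTsq (B i p l)) p)
        = sysRhs k (fun p => strh ((a p : PowerSeries (Polynomial K))))
            (fun i p l => PowerSeries.X * strh ((B i p l : PowerSeries (Polynomial K))))
            (fun l => PowerSeries.map (Polynomial.mapRingHom (Polynomial.evalRingHom (0 : K)))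
              (sysSol k (fun p => substTsq (a p))
                (fun i p l => (if i = k ∧ p = l
                    then PowerSeries.C (Polynomial.C (Polynomial.X * Polynomial.C (lam p)))
                    else 0) + PowerSeries.X * substTsq (B i p l)) l)) p := by
      intro p
      conv_lhs => rw [sysSol_fixed]
      unfold sysRhs
      simp only [map_add, map_mul, map_sum, PowerSeries.map_X,
        mapRingHom_seriesDelta_iterate, map_substTsq,
        apply_ite (PowerSeries.map (Polynomial.mapRingHom (Polynomial.evalRingHom (0 : K)))),
        PowerSeries.map_C, Polynomial.coe_mapRingHom, Polynomial.map_C,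
        Polynomial.coe_evalRingHom, Polynomial.eval_X, map_zero, zero_mul, mul_zero,
        ite_self, zero_add]
    have h1 := sysSol_unique hα
    have h2 := sysSol_unique hβ
    have h3 := (congrFun h2 p).trans (congrFun h1 p).symm
    refine (h3.trans ?_)
    refine PowerSeries.ext fun N => ?_
    rw [coeff_strh, coeff_mk]
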